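/- With α(s) = (s/3) π^{2−s/2} Γ(s/2) ζ(s−2), for s in the critical strip 0 < Re(s) < 1 the equality |α(1−s)| = |α(s)| is equivalent to |ζ(s+2)/ζ(s−2)| = 4π² / |s² − 1|. -/

import Mathlib

open Complex

/-- The function α appearing in the asymptotics of finite torus zeta functions. -/
noncomputable def alphaFn (s : ℂ) : ℂ :=
  (s / 3) * (Real.pi : ℂ) ^ (2 - s / 2) * Complex.Gamma (s / 2) * riemannZeta (s - 2)

theorem abs_alpha_eq_iff (s : ℂ) (h0 : 0 < s.re) (h1 : s.re < 1) :
    ‖alphaFn (1 - s)‖ = ‖alphaFn s‖ ↔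
      ‖riemannZeta (s + 2) / riemannZeta (s - 2)‖ =
        4 * Real.pi ^ 2 / ‖s ^ 2 - 1‖ := by
  have hpi : (Real.pi : ℂ) ≠ 0 := ofReal_ne_zero.mpr Real.pi_ne_zero
  have hs0 : s ≠ 0 := fun h => by rw [h] at h0; simp at h0
  have hns : (-1 - s : ℂ) ≠ 0 := by
    intro h; apply_fun re at h; simp at h; linarith
  have hsp2 : (s + 2 : ℂ) ≠ 0 := by
    intro h; apply_fun re at h; simp at h; linarith
  have hsm2 : (s - 2 : ℂ) ≠ 0 := by
    intro h; apply_fun re at h; simp at h; linarith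
  have h3s : (3 - s : ℂ) ≠ 0 := by
    intro h; apply_fun re at h; simp at h; linarith
  have hG1 : Gammaℝ (-1 - s) ≠ 0 := by
    rw [Ne, Gammaℝ_eq_zero_iff]
    rintro ⟨n, hn⟩
    apply_fun re at hn
    simp at hn
    rcases Nat.eq_zero_or_pos n with h | h
    · rw [h] at hn; simp at hn; linarith
    · have : (1 : ℝ) ≤ n := by exact_mod_cast h
      linarith
  have hG2 : Gammaℝ (s + 2) ≠ 0 := Gammaℝ_ne_zero_of_re_pos (by simp; linarith)
  have hGm2 : Gammaℝ (s - 2) ≠ 0 := by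
    rw [Ne, Gammaℝ_eq_zero_iff]
    rintro ⟨n, hn⟩
    apply_fun re at hn
    simp at hn
    rcases Nat.eq_zero_or_pos n with h | h
    · rw [h] at hn; simp at hn; linarith
    · have : (1 : ℝ) ≤ n := by exact_mod_cast h
      linarith
  have hG3s : Gammaℝ (3 - s) ≠ 0 := Gammaℝ_ne_zero_of_re_pos (by simp; linarith)
  have hζ3s : riemannZeta (3 - s) ≠ 0 :=
    riemannZeta_ne_zero_of_one_le_re (by simp; linarith)
  -- functional equation relating ζ(s-2) to ζ(3-s)
  have h35 : riemannZeta (s - 2) * Gammaℝ (s - 2) = riemannZeta (3 - s) * Gammaℝ (3 - s) := by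
    rw [riemannZeta_def_of_ne_zero hsm2, riemannZeta_def_of_ne_zero h3s,
      div_mul_cancel₀ _ hGm2, div_mul_cancel₀ _ hG3s,
      show (s : ℂ) - 2 = 1 - (3 - s) by ring, completedRiemannZeta_one_sub]
  have hζm2 : riemannZeta (s - 2) ≠ 0 := by
    intro h
    rw [h, zero_mul] at h35
    exact mul_ne_zero hζ3s hG3s h35.symm
  -- functional equation relating ζ(-1-s) to ζ(s+2)
  have hζfe : riemannZeta (-1 - s) * Gammaℝ (-1 - s)
      = riemannZeta (s + 2) * Gammaℝ (s + 2) := by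
    rw [riemannZeta_def_of_ne_zero hns, riemannZeta_def_of_ne_zero hsp2,
      div_mul_cancel₀ _ hG1, div_mul_cancel₀ _ hG2,
      show (-1 : ℂ) - s = 1 - (s + 2) by ring, completedRiemannZeta_one_sub]
  -- Gamma recurrences
  have hGa : Complex.Gamma ((1 - s) / 2) = ((-1 - s) / 2) * Complex.Gamma ((-1 - s) / 2) := by
    rw [show (1 - s) / 2 = (-1 - s) / 2 + 1 by ring,
      Complex.Gamma_add_one _ (div_ne_zero hns two_ne_zero)]
  have hGb : Complex.Gamma ((s + 2) / 2) = (s / 2) * Complex.Gamma (s / 2) := by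
    rw [show (s + 2) / 2 = s / 2 + 1 by ring,
      Complex.Gamma_add_one _ (div_ne_zero hs0 two_ne_zero)]
  have hkey2 : riemannZeta (-1 - s) * ((Real.pi : ℂ) ^ (-(-1 - s) / 2)
        * Complex.Gamma ((-1 - s) / 2))
      = riemannZeta (s + 2) * ((Real.pi : ℂ) ^ (-(s + 2) / 2)
        * ((s / 2) * Complex.Gamma (s / 2))) := by
    have := hζfe
    rw [Gammaℝ_def, Gammaℝ_def, hGb] at this
    exact this
  -- merging powers of π
  have hc : (Real.pi : ℂ) ^ (2 - (1 - s) / 2) * (Real.pi : ℂ) ^ (-(s + 2) / 2)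
        * (Real.pi : ℂ) ^ (2 : ℂ)
      = (Real.pi : ℂ) ^ (2 - s / 2) * (Real.pi : ℂ) ^ (-(-1 - s) / 2) := by
    rw [← cpow_add _ _ hpi, ← cpow_add _ _ hpi, ← cpow_add _ _ hpi]
    congr 1
    ring
  -- the key identity (multiplied by Gammaℝ (-1-s))
  have main : alphaFn (1 - s) * (4 * (Real.pi : ℂ) ^ (2 : ℂ)) * riemannZeta (s - 2)
        * Gammaℝ (-1 - s)
      = (s ^ 2 - 1) * riemannZeta (s + 2) * alphaFn s * Gammaℝ (-1 - s) := by
    simp only [alphaFn, Gammaℝ_def]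
    rw [show (1 : ℂ) - s - 2 = -1 - s by ring]
    linear_combination
      ((1 - s) / 3 * ((Real.pi : ℂ) ^ (2 - (1 - s) / 2))
          * Complex.Gamma ((1 - s) / 2) * 4 * (Real.pi : ℂ) ^ (2 : ℂ)
          * riemannZeta (s - 2)) * hkey2
      + ((1 - s) / 3 * ((Real.pi : ℂ) ^ (2 - (1 - s) / 2)) * (Real.pi : ℂ) ^ (2 : ℂ)
          * riemannZeta (s - 2) * riemannZeta (s + 2)
          * ((Real.pi : ℂ) ^ (-(s + 2) / 2)) * (s / 2) * Complex.Gamma (s / 2) * 4) * hGa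
      + ((1 - s) / 3 * ((-1 - s) / 2) * (s / 2) * 4 * Complex.Gamma ((-1 - s) / 2)
          * Complex.Gamma (s / 2) * riemannZeta (s + 2) * riemannZeta (s - 2)) * hc
  have key : alphaFn (1 - s) * (4 * (Real.pi : ℂ) ^ (2 : ℂ)) * riemannZeta (s - 2)
      = (s ^ 2 - 1) * riemannZeta (s + 2) * alphaFn s := mul_right_cancel₀ hG1 main
  -- nonvanishing facts
  have hGam : Complex.Gamma (s / 2) ≠ 0 := by
    apply Complex.Gamma_ne_zero_of_re_pos
    rw [div_ofNat_re]
    positivity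
  have hcp : (Real.pi : ℂ) ^ (2 - s / 2) ≠ 0 := by
    simp [Complex.cpow_eq_zero_iff, hpi]
  have hαne : alphaFn s ≠ 0 := by
    simp only [alphaFn]
    exact mul_ne_zero (mul_ne_zero (mul_ne_zero (div_ne_zero hs0 (by norm_num)) hcp) hGam) hζm2
  have hs21 : (s ^ 2 - 1 : ℂ) ≠ 0 := by
    intro h
    have h2 : (s - 1) * (s + 1) = 0 := by linear_combination h
    rcases mul_eq_zero.mp h2 with h3 | h3
    · apply_fun re at h3; simp at h3; linarith
    · apply_fun re at h3; simp at h3; linarith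
  -- pass to absolute values
  have habs : ‖alphaFn (1 - s)‖ * (4 * Real.pi ^ 2) * ‖riemannZeta (s - 2)‖
      = ‖s ^ 2 - 1‖ * ‖riemannZeta (s + 2)‖
        * ‖alphaFn s‖ := by
    have h4 : ‖4 * (Real.pi : ℂ) ^ (2 : ℂ)‖ = 4 * Real.pi ^ 2 := by
      rw [norm_mul, Complex.norm_cpow_eq_rpow_re_of_pos Real.pi_pos,
        show ((2 : ℂ)).re = ((2 : ℕ) : ℝ) by norm_num, Real.rpow_natCast]
      norm_num
    calc ‖alphaFn (1 - s)‖ * (4 * Real.pi ^ 2) * ‖riemannZeta (s - 2)‖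
        = ‖alphaFn (1 - s) * (4 * (Real.pi : ℂ) ^ (2 : ℂ)) * riemannZeta (s - 2)‖ := by
          rw [norm_mul, norm_mul, h4]
      _ = ‖(s ^ 2 - 1) * riemannZeta (s + 2) * alphaFn s‖ := by rw [key]
      _ = _ := by rw [norm_mul, norm_mul]
  have hA : ‖alphaFn s‖ ≠ 0 := norm_ne_zero_iff.mpr hαne
  have hz3 : ‖riemannZeta (s - 2)‖ ≠ 0 := norm_ne_zero_iff.mpr hζm2
  have hcne : ‖s ^ 2 - 1‖ ≠ 0 := norm_ne_zero_iff.mpr hs21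
  have hp4 : (0 : ℝ) < 4 * Real.pi ^ 2 := by positivity
  constructor
  · intro h
    rw [h] at habs
    have h3 : (4 * Real.pi ^ 2 * ‖riemannZeta (s - 2)‖) * ‖alphaFn s‖
        = (‖s ^ 2 - 1‖ * ‖riemannZeta (s + 2)‖)
          * ‖alphaFn s‖ := by linear_combination habs
    have h4 := mul_right_cancel₀ hA h3
    rw [norm_div, div_eq_div_iff hz3 hcne]
    linear_combination -h4
  · intro h
    rw [norm_div, div_eq_div_iff hz3 hcne] at h
    have h3 : ‖alphaFn (1 - s)‖ * (4 * Real.pi ^ 2 * ‖riemannZeta (s - 2)‖)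
        = ‖alphaFn s‖ * (4 * Real.pi ^ 2 * ‖riemannZeta (s - 2)‖) := by
      linear_combination habs + ‖alphaFn s‖ * h
    exact mul_right_cancel₀ (by positivity) h3
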